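/- Let Γ be a group with automorphisms α₀, α₁ and let G = LΓ ⋊ V be the associated twisted fraction group. Then the center of G equals D_𝔠(Z(Γ)^α), the subgroup of constant maps from the Cantor space to the set of elements of the center of Γ that are fixed by both α₀ and α₁. -/

import Mathlib

/-! Basic setup: the Cantor space, prefix replacement, Thompson's group `V`,
slopes, dyadic rationals, standard dyadic partitions, locally constant maps,
and the permutation model of the twisted fraction groups `LΓ ⋊ V`. -/

abbrev Cantor : Type := ℕ → Bool

/-- Concatenation of a finite word with an infinite sequence. -/
def cat (w : List Bool) (x : Cantor) : Cantor :=
  fun n => if n < w.length then w.getD n false else x (n - w.length)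

/-- The standard dyadic interval (cylinder) associated to a finite word. -/
def cyl (w : List Bool) : Set Cantor := {x | ∃ y : Cantor, x = cat w y}

/-- Membership in Thompson's group `V`: a homeomorphism of the Cantor space which is
everywhere locally given by prefix replacement. -/
def memV (v : Cantor ≃ₜ Cantor) : Prop :=
  ∀ x : Cantor, ∃ (m w : List Bool) (y : Cantor),
    x = cat m y ∧ ∀ z : Cantor, v (cat m z) = cat w z

/-- `HasLogSlope v x k` : `k = log₂ v'(x)`, base-2 logarithm of the slope of `v` at `x`. -/
def HasLogSlope (v : Cantor ≃ₜ Cantor) (x : Cantor) (k : ℤ) : Prop :=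
  ∃ (m w : List Bool) (y : Cantor),
    x = cat m y ∧ (∀ z : Cantor, v (cat m z) = cat w z) ∧
      k = (m.length : ℤ) - (w.length : ℤ)

open Classical in
noncomputable def logSlope (v : Cantor ≃ₜ Cantor) (x : Cantor) : ℤ :=
  if h : ∃ k : ℤ, HasLogSlope v x k then h.choose else 0

/-- The eventually periodic sequence `c∞ = c·c·c⋯`. -/
def tailSeq (c : List Bool) : Cantor := fun n => c.getD (n % c.length) false

/-- `x` lies in the tail equivalence class of the word `c`, i.e. `x = y·c∞`. -/
def InTailClass (x : Cantor) (c : List Bool) : Prop :=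
  ∃ y : List Bool, x = cat y (tailSeq c)

/-- `x` is eventually periodic (a rational point of the Cantor space). -/
def EvPeriodic (x : Cantor) : Prop :=
  ∃ (y c : List Bool), c ≠ [] ∧ x = cat y (tailSeq c)

/-- A prime word: a nonempty word which is not a proper power of a word. -/
def PrimeWord (c : List Bool) : Prop :=
  c ≠ [] ∧ ∀ (d : List Bool) (k : ℕ), 2 ≤ k → c ≠ (List.replicate k d).flatten

/-- `conjH φ v = φ ∘ v ∘ φ⁻¹`. -/
def conjH (φ v : Cantor ≃ₜ Cantor) : Cantor ≃ₜ Cantor := φ.symm.trans (v.trans φ)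

/-- `φ` normalizes Thompson's group `V` inside `Homeo(𝔠)` : `φ V φ⁻¹ = V`. -/
def NormalizesV (φ : Cantor ≃ₜ Cantor) : Prop :=
  (conjH φ) '' {v | memV v} = {v | memV v}

/-- The copy of the dyadic rationals `Q₂ ⊂ 𝔠` : finitely supported sequences. -/
def InQ2 (x : Cantor) : Prop := ∃ n : ℕ, ∀ m, n ≤ m → x m = false

def zeroSeq : Cantor := fun _ => false

/-- A standard dyadic partition of the Cantor space. -/
def IsSDP (P : Finset (List Bool)) : Prop :=
  ∀ x : Cantor, ∃! w : List Bool, w ∈ P ∧ x ∈ cyl w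

/-- Locally constant map: constant on each piece of some standard dyadic partition. -/
def IsLC {Γ : Type*} (f : Cantor → Γ) : Prop :=
  ∃ P : Finset (List Bool), IsSDP P ∧ ∀ w ∈ P, ∀ y z : Cantor, f (cat w y) = f (cat w z)

/-- `h` agrees on `Q₂` with (the restriction of) a locally constant map. -/
def AgreesOnQ2WithLC {Γ : Type*} (h : Cantor → Γ) : Prop :=
  ∃ b : Cantor → Γ, IsLC b ∧ ∀ x, InQ2 x → h x = b x

section GroupPart
variable {Γ : Type*} [Group Γ]

/-- `alphaWord α₀ α₁ (m₁⋯m_k) = α_{m_k} ∘ ⋯ ∘ α_{m₁}`. -/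
def alphaWord (α₀ α₁ : Γ ≃* Γ) (m : List Bool) : Γ ≃* Γ :=
  m.foldl (fun acc b => acc.trans (if b then α₁ else α₀)) (MulEquiv.refl Γ)

open Classical in
/-- The twisting automorphism `τ_{v,x} = α_{v(I)}⁻¹ ∘ α_I` for a standard dyadic
interval `I` containing `x` and adapted to `v`. -/
noncomputable def tauEquiv (α₀ α₁ : Γ ≃* Γ) (v : Cantor ≃ₜ Cantor) (x : Cantor) : Γ ≃* Γ :=
  if h : ∃ p : List Bool × List Bool, x ∈ cyl p.1 ∧ ∀ z : Cantor, v (cat p.1 z) = cat p.2 z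
  then (alphaWord α₀ α₁ h.choose.1).trans (alphaWord α₀ α₁ h.choose.2).symm
  else MulEquiv.refl Γ

/-- The element `a·v` of the twisted `LΓ ⋊ V`, realized as the permutation
`(x,g) ↦ (v x, a(v x) · τ_{v,x}(g))` of `𝔠 × Γ`. -/
noncomputable def permOf (α₀ α₁ : Γ ≃* Γ) (a : Cantor → Γ) (v : Cantor ≃ₜ Cantor) :
    Equiv.Perm (Cantor × Γ) where
  toFun p := (v p.1, a (v p.1) * tauEquiv α₀ α₁ v p.1 p.2)
  invFun p := (v.symm p.1, (tauEquiv α₀ α₁ v (v.symm p.1)).symm ((a p.1)⁻¹ * p.2))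
  left_inv := by rintro ⟨x, g⟩; simp
  right_inv := by rintro ⟨x, g⟩; simp

end GroupPart

/-- The twisted fraction group `G = LΓ ⋊ V` of the triple `(Γ, α₀, α₁)`,
as a group of permutations of `𝔠 × Γ`. -/
noncomputable def Gsub (Γ : Type*) [Group Γ] (α₀ α₁ : Γ ≃* Γ) :
    Subgroup (Equiv.Perm (Cantor × Γ)) :=
  Subgroup.closure {p | ∃ a v, IsLC a ∧ memV v ∧ p = permOf α₀ α₁ a v}

/-- The untwisted case `α₀ = α₁ = id`. -/
noncomputable def permOfU {Γ : Type*} [Group Γ] (a : Cantor → Γ) (v : Cantor ≃ₜ Cantor) :=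
  permOf (MulEquiv.refl Γ) (MulEquiv.refl Γ) a v

/-- The untwisted fraction group `G = LΓ ⋊ V`. -/
noncomputable def GsubU (Γ : Type*) [Group Γ] := Gsub Γ (MulEquiv.refl Γ) (MulEquiv.refl Γ)

/-- `f ∈ N_{K̄}(G)` : the element `f` of `K̄ = ∏_{Q₂}Γ` normalizes `G = LΓ ⋊ V`
(untwisted case), i.e. `f·a·(f^v)⁻¹` and `f⁻¹·a·f^v` are locally constant on `Q₂`. -/
def InNormKbar {Γ : Type*} [Group Γ] (f : Cantor → Γ) : Prop :=
  ∀ (a : Cantor → Γ) (v : Cantor ≃ₜ Cantor), IsLC a → memV v →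
    AgreesOnQ2WithLC (fun x => f x * a x * (f (v.symm x))⁻¹) ∧
    AgreesOnQ2WithLC (fun x => (f x)⁻¹ * a x * f (v.symm x))

namespace CenterAux

/-! ### Basic word/sequence lemmas -/

lemma cat_lt {u : List Bool} {n : ℕ} (y : Cantor) (h : n < u.length) :
    cat u y n = u.getD n false := by simp [cat, h]

lemma cat_ge {u : List Bool} {n : ℕ} (y : Cantor) (h : u.length ≤ n) :
    cat u y n = y (n - u.length) := by simp [cat, Nat.not_lt.mpr h]

lemma cat_nil (y : Cantor) : cat [] y = y := by funext n; simp [cat]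

lemma cat_cat (u s : List Bool) (z : Cantor) : cat u (cat s z) = cat (u ++ s) z := by
  funext n
  by_cases h1 : n < u.length
  · rw [cat_lt _ h1, cat_lt _ (by simp; omega), List.getD_append _ _ _ _ h1]
  · push_neg at h1
    rw [cat_ge _ h1]
    by_cases h2 : n - u.length < s.length
    · rw [cat_lt _ h2, cat_lt _ (by simp; omega), List.getD_append_right _ _ _ _ h1]
    · push_neg at h2
      rw [cat_ge _ h2, cat_ge _ (by simp; omega)]
      congr 1
      simp
      omega

/-- `x` starts with the word `u`. -/
def PrefixOf (u : List Bool) (x : Cantor) : Prop :=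
  ∀ i, i < u.length → x i = u.getD i false

def dropSeq (k : ℕ) (x : Cantor) : Cantor := fun n => x (n + k)

lemma prefixOf_cat (u : List Bool) (z : Cantor) : PrefixOf u (cat u z) :=
  fun i hi => cat_lt z hi

lemma dropSeq_cat (u : List Bool) (z : Cantor) : dropSeq u.length (cat u z) = z := by
  funext n
  rw [dropSeq, cat_ge _ (by omega)]
  congr 1
  omega

lemma cat_dropSeq {u : List Bool} {x : Cantor} (h : PrefixOf u x) :
    cat u (dropSeq u.length x) = x := by
  funext n
  by_cases h1 : n < u.length
  · rw [cat_lt _ h1, h n h1]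
  · push_neg at h1
    rw [cat_ge _ h1, dropSeq]
    congr 1
    omega

lemma mem_cyl_iff {u : List Bool} {x : Cantor} : x ∈ cyl u ↔ PrefixOf u x := by
  constructor
  · rintro ⟨y, rfl⟩; exact prefixOf_cat u y
  · intro h; exact ⟨dropSeq u.length x, (cat_dropSeq h).symm⟩

lemma words_eq {m w : List Bool} (h : ∀ z : Cantor, cat m z = cat w z) : m = w := by
  have hlen : m.length = w.length := by
    by_contra hne
    rcases Nat.lt_or_ge m.length w.length with hlt | hge
    · have h1 := congrFun (h (fun _ => true)) m.length
      have h2 := congrFun (h (fun _ => false)) m.length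
      rw [cat_ge _ le_rfl, cat_lt _ hlt] at h1 h2
      exact Bool.noConfusion (h1.trans h2.symm)
    · have hlt : w.length < m.length := by omega
      have h1 := congrFun (h (fun _ => true)) w.length
      have h2 := congrFun (h (fun _ => false)) w.length
      rw [cat_lt _ hlt, cat_ge _ le_rfl] at h1 h2
      exact Bool.noConfusion (h1.symm.trans h2)
  refine List.ext_getElem hlen (fun n h1 h2 => ?_)
  have := congrFun (h (fun _ => false)) n
  rw [cat_lt _ h1, cat_lt _ h2, List.getD_eq_getElem _ _ h1, List.getD_eq_getElem _ _ h2] at this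
  exact this

lemma prefix_decomp {m m' : List Bool} {x : Cantor} (h1 : PrefixOf m x) (h2 : PrefixOf m' x)
    (h : m.length ≤ m'.length) : ∃ s, m' = m ++ s := by
  refine ⟨m'.drop m.length, ?_⟩
  have htake : m'.take m.length = m := by
    refine List.ext_getElem (by simp [h]) (fun n hn1 hn2 => ?_)
    rw [List.getElem_take]
    have e1 := h1 n (by omega)
    have e2 := h2 n (by omega)
    rw [List.getD_eq_getElem _ _ (by omega)] at e1 e2
    exact e2.symm.trans e1
  conv_lhs => rw [← List.take_append_drop m.length m', htake]

def firstWord (L : ℕ) (x : Cantor) : List Bool := (List.range L).map x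

@[simp] lemma firstWord_length (L : ℕ) (x : Cantor) : (firstWord L x).length = L := by
  simp [firstWord]

lemma firstWord_getD {L n : ℕ} (x : Cantor) (h : n < L) :
    (firstWord L x).getD n false = x n := by
  rw [List.getD_eq_getElem _ _ (by simp [h])]
  simp [firstWord]

lemma prefixOf_firstWord (L : ℕ) (x : Cantor) : PrefixOf (firstWord L x) x := by
  intro i hi
  rw [firstWord_getD x (by simpa using hi)]

lemma cat_firstWord (L : ℕ) (x : Cantor) : cat (firstWord L x) (dropSeq L x) = x := by
  have := cat_dropSeq (prefixOf_firstWord L x)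
  rwa [firstWord_length] at this

end CenterAux
namespace CenterAux

/-! ### The swap involution exchanging two incomparable cylinders -/

/-- Two words are incomparable (disjoint cylinders). -/
def Incomp (u w : List Bool) : Prop :=
  ∃ i, i < u.length ∧ i < w.length ∧ u.getD i false ≠ w.getD i false

lemma Incomp.symm {u w : List Bool} (h : Incomp u w) : Incomp w u := by
  obtain ⟨i, h1, h2, h3⟩ := h
  exact ⟨i, h2, h1, fun e => h3 e.symm⟩

lemma Incomp.not_prefixOf {u w : List Bool} (h : Incomp u w) {x : Cantor}
    (hu : PrefixOf u x) : ¬ PrefixOf w x := by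
  obtain ⟨i, h1, h2, h3⟩ := h
  intro hw
  exact h3 ((hu i h1).symm.trans (hw i h2))

open Classical in
noncomputable def swapFun (u w : List Bool) (x : Cantor) : Cantor :=
  if PrefixOf u x then cat w (dropSeq u.length x)
  else if PrefixOf w x then cat u (dropSeq w.length x)
  else x

lemma swapFun_cat_left {u w : List Bool} (z : Cantor) :
    swapFun u w (cat u z) = cat w z := by
  rw [swapFun, if_pos (prefixOf_cat u z), dropSeq_cat]

lemma swapFun_cat_right {u w : List Bool} (h : Incomp u w) (z : Cantor) :
    swapFun u w (cat w z) = cat u z := by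
  rw [swapFun, if_neg (fun hp => h.symm.not_prefixOf (prefixOf_cat w z) hp),
    if_pos (prefixOf_cat w z), dropSeq_cat]

lemma swapFun_of_not {u w : List Bool} {x : Cantor} (hu : ¬ PrefixOf u x)
    (hw : ¬ PrefixOf w x) : swapFun u w x = x := by
  rw [swapFun, if_neg hu, if_neg hw]

lemma swapFun_invol {u w : List Bool} (h : Incomp u w) (x : Cantor) :
    swapFun u w (swapFun u w x) = x := by
  by_cases hu : PrefixOf u x
  · have hx : x = cat u (dropSeq u.length x) := (cat_dropSeq hu).symm
    conv_lhs => rw [hx, swapFun_cat_left]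
    rw [swapFun_cat_right h, ← hx]
  · by_cases hw : PrefixOf w x
    · have hx : x = cat w (dropSeq w.length x) := (cat_dropSeq hw).symm
      conv_lhs => rw [hx, swapFun_cat_right h]
      rw [swapFun_cat_left, ← hx]
    · rw [swapFun_of_not hu hw, swapFun_of_not hu hw]

lemma prefixOf_congr {u : List Bool} {x y : Cantor} (hagree : ∀ i, i < u.length → x i = y i) :
    PrefixOf u x ↔ PrefixOf u y := by
  constructor <;> intro h i hi
  · rw [← hagree i hi]; exact h i hi
  · rw [hagree i hi]; exact h i hi

/-- cylinders are open -/
lemma isOpen_agree (L : ℕ) (x : Cantor) : IsOpen {y : Cantor | ∀ i < L, y i = x i} := by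
  have : {y : Cantor | ∀ i < L, y i = x i} =
      ⋂ i ∈ Finset.range L, (fun y : Cantor => y i) ⁻¹' {x i} := by
    ext y
    simp [Set.mem_iInter]
  rw [this]
  exact isOpen_biInter_finset fun i _ =>
    (continuous_apply i).isOpen_preimage _ (isOpen_discrete _)

lemma continuous_swapFun (u w : List Bool) : Continuous (swapFun u w) := by
  refine continuous_pi fun n => IsLocallyConstant.continuous ?_
  rw [IsLocallyConstant.iff_exists_open]
  intro x
  set L := u.length + w.length + n + 1 with hL
  refine ⟨{y : Cantor | ∀ i < L, y i = x i}, isOpen_agree L x, fun i _ => rfl, ?_⟩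
  intro y hy
  have hyu : PrefixOf u y ↔ PrefixOf u x := prefixOf_congr (fun i hi => hy i (by omega))
  have hyw : PrefixOf w y ↔ PrefixOf w x := prefixOf_congr (fun i hi => hy i (by omega))
  by_cases hu : PrefixOf u x
  · rw [swapFun, if_pos (hyu.mpr hu), swapFun, if_pos hu]
    by_cases hn : n < w.length
    · rw [cat_lt _ hn, cat_lt _ hn]
    · push_neg at hn
      rw [cat_ge _ hn, cat_ge _ hn, dropSeq, dropSeq]
      exact hy _ (by omega)
  · by_cases hw : PrefixOf w x
    · rw [swapFun, if_neg (fun hp => hu (hyu.mp hp)), if_pos (hyw.mpr hw),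
        swapFun, if_neg hu, if_pos hw]
      by_cases hn : n < u.length
      · rw [cat_lt _ hn, cat_lt _ hn]
      · push_neg at hn
        rw [cat_ge _ hn, cat_ge _ hn, dropSeq, dropSeq]
        exact hy _ (by omega)
    · rw [swapFun_of_not (fun hp => hu (hyu.mp hp)) (fun hp => hw (hyw.mp hp)),
        swapFun_of_not hu hw]
      exact hy n (by omega)

/-- The homeomorphism of the Cantor space swapping two incomparable cylinders. -/
noncomputable def swapH (u w : List Bool) (h : Incomp u w) : Cantor ≃ₜ Cantor where
  toFun := swapFun u w
  invFun := swapFun u w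
  left_inv := swapFun_invol h
  right_inv := swapFun_invol h
  continuous_toFun := continuous_swapFun u w
  continuous_invFun := continuous_swapFun u w

@[simp] lemma swapH_apply (u w : List Bool) (h : Incomp u w) (x : Cantor) :
    swapH u w h x = swapFun u w x := rfl

lemma swapH_memV {u w : List Bool} (h : Incomp u w) : memV (swapH u w h) := by
  intro x
  by_cases hu : PrefixOf u x
  · exact ⟨u, w, dropSeq u.length x, (cat_dropSeq hu).symm,
      fun z => swapFun_cat_left z⟩
  · by_cases hw : PrefixOf w x
    · exact ⟨w, u, dropSeq w.length x, (cat_dropSeq hw).symm,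
        fun z => swapFun_cat_right h z⟩
    · set L := max u.length w.length with hL
      refine ⟨firstWord L x, firstWord L x, dropSeq L x,
        (cat_firstWord L x).symm, fun z => ?_⟩
      have hagree : ∀ i, i < L → cat (firstWord L x) z i = x i := by
        intro i hi
        rw [cat_lt _ (by simpa using hi), firstWord_getD x hi]
      refine swapFun_of_not ?_ ?_
      · intro hp
        exact hu ((prefixOf_congr (fun i hi => hagree i (by omega))).mp hp)
      · intro hp
        exact hw ((prefixOf_congr (fun i hi => hagree i (by omega))).mp hp)

end CenterAux
namespace CenterAux

/-! ### `alphaWord` and `tauEquiv` lemmas -/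

section Alpha
variable {Γ : Type*} [Group Γ] (α₀ α₁ : Γ ≃* Γ)

lemma foldl_alpha : ∀ (t : List Bool) (e : Γ ≃* Γ) (g : Γ),
    (List.foldl (fun acc b => acc.trans (if b then α₁ else α₀)) e t) g =
      alphaWord α₀ α₁ t (e g)
  | [], e, g => rfl
  | b :: t, e, g => by
    rw [alphaWord, List.foldl_cons, List.foldl_cons, foldl_alpha t, foldl_alpha t]
    rfl

lemma alphaWord_append (m t : List Bool) (g : Γ) :
    alphaWord α₀ α₁ (m ++ t) g = alphaWord α₀ α₁ t (alphaWord α₀ α₁ m g) := by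
  rw [alphaWord, List.foldl_append, foldl_alpha]
  rfl

lemma alphaWord_singleton (b : Bool) (g : Γ) :
    alphaWord α₀ α₁ [b] g = (if b then α₁ else α₀) g := rfl

lemma alphaWord_concat (m : List Bool) (b : Bool) (g : Γ) :
    alphaWord α₀ α₁ (m ++ [b]) g = (if b then α₁ else α₀) (alphaWord α₀ α₁ m g) := by
  rw [alphaWord_append, alphaWord_singleton]

lemma alphaWord_fix {g : Γ} (h0 : α₀ g = g) (h1 : α₁ g = g) :
    ∀ m : List Bool, alphaWord α₀ α₁ m g = g
  | [] => rfl
  | b :: t => by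
    have hb : (if b then α₁ else α₀) g = g := by cases b <;> simpa
    have : alphaWord α₀ α₁ (b :: t) g = alphaWord α₀ α₁ t ((if b then α₁ else α₀) g) := by
      rw [alphaWord, List.foldl_cons, foldl_alpha]
      rfl
    rw [this, hb, alphaWord_fix h0 h1 t]

lemma alphaWord_symm_fix {g : Γ} (h0 : α₀ g = g) (h1 : α₁ g = g) (m : List Bool) :
    (alphaWord α₀ α₁ m).symm g = g := by
  rw [MulEquiv.symm_apply_eq, alphaWord_fix α₀ α₁ h0 h1]

/-- The basic well-definedness lemma for `tauEquiv`: its value can be computed from any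
adapted pair. -/
lemma tauEquiv_eq (v : Cantor ≃ₜ Cantor) (x : Cantor) {m w : List Bool}
    (hx : PrefixOf m x) (hv : ∀ z : Cantor, v (cat m z) = cat w z) (g : Γ) :
    tauEquiv α₀ α₁ v x g = (alphaWord α₀ α₁ w).symm (alphaWord α₀ α₁ m g) := by
  have hex : ∃ p : List Bool × List Bool, x ∈ cyl p.1 ∧ ∀ z : Cantor, v (cat p.1 z) = cat p.2 z :=
    ⟨(m, w), mem_cyl_iff.mpr hx, hv⟩
  rw [tauEquiv, dif_pos hex]
  obtain ⟨hx', hv'⟩ := hex.choose_spec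
  set p := hex.choose with hp
  have hx'' : PrefixOf p.1 x := mem_cyl_iff.mp hx'
  rcases le_or_gt m.length p.1.length with hle | hlt
  · obtain ⟨s, hs⟩ := prefix_decomp hx hx'' hle
    have hws : p.2 = w ++ s := by
      refine words_eq (fun z => ?_)
      rw [← hv' z, hs, ← cat_cat, hv, cat_cat]
    simp only [MulEquiv.trans_apply]
    rw [hs, hws, alphaWord_append, MulEquiv.symm_apply_eq, alphaWord_append,
      MulEquiv.apply_symm_apply]
  · obtain ⟨s, hs⟩ := prefix_decomp hx'' hx (le_of_lt hlt)
    have hws : w = p.2 ++ s := by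
      refine words_eq (fun z => ?_)
      rw [← hv z, hs, ← cat_cat, hv', cat_cat]
    simp only [MulEquiv.trans_apply]
    rw [hs, hws, alphaWord_append, eq_comm, MulEquiv.symm_apply_eq, alphaWord_append,
      MulEquiv.apply_symm_apply]

lemma tauEquiv_refl (x : Cantor) (g : Γ) :
    tauEquiv α₀ α₁ (Homeomorph.refl Cantor) x g = g := by
  rw [tauEquiv_eq α₀ α₁ _ x (m := []) (w := []) (fun i hi => by simp at hi)
    (fun z => rfl)]
  rfl

lemma tauEquiv_fix (v : Cantor ≃ₜ Cantor) (x : Cantor) {g : Γ}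
    (h0 : α₀ g = g) (h1 : α₁ g = g) : tauEquiv α₀ α₁ v x g = g := by
  rw [tauEquiv]
  split
  · rename_i hex
    simp only [MulEquiv.trans_apply]
    rw [alphaWord_fix α₀ α₁ h0 h1, alphaWord_symm_fix α₀ α₁ h0 h1]
  · rfl

end Alpha

end CenterAux
namespace CenterAux

section Key
variable {Γ : Type*} [Group Γ] (α₀ α₁ : Γ ≃* Γ)

/-- IsLC refinement: `a` is constant on all sufficiently deep cylinders. -/
lemma isLC_deep {a : Cantor → Γ} (ha : IsLC a) :
    ∃ N : ℕ, ∀ m : List Bool, N ≤ m.length → ∀ y z : Cantor, a (cat m y) = a (cat m z) := by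
  obtain ⟨P, hP, hconst⟩ := ha
  refine ⟨P.sup List.length, fun m hm y z => ?_⟩
  obtain ⟨w, ⟨hwP, hwcyl⟩, -⟩ := hP (cat m y)
  have hw : PrefixOf w (cat m y) := mem_cyl_iff.mp hwcyl
  have hwlen : w.length ≤ m.length := le_trans (Finset.le_sup hwP) hm
  obtain ⟨s, hs⟩ := prefix_decomp hw (prefixOf_cat m y) hwlen
  rw [hs, ← cat_cat, ← cat_cat, hconst w hwP]

/-- The main combinatorial lemma extracting the constant fixed central value. -/
lemma key (a : Cantor → Γ) (N : ℕ)
    (hconst : ∀ m : List Bool, N ≤ m.length → ∀ y z : Cantor, a (cat m y) = a (cat m z))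
    (hA : ∀ (p : List Bool) (z : Cantor),
      a (cat (p ++ [true]) z) =
        (alphaWord α₀ α₁ (p ++ [true])).symm (alphaWord α₀ α₁ (p ++ [false]) (a (cat (p ++ [false]) z))))
    (hB : ∀ (p : List Bool) (z : Cantor),
      a (cat (p ++ [true, false]) z) =
        (alphaWord α₀ α₁ (p ++ [true, false])).symm (alphaWord α₀ α₁ (p ++ [false]) (a (cat (p ++ [false]) z)))) :
    ∃ g : Γ, α₀ g = g ∧ α₁ g = g ∧ ∀ x, a x = g := by
  set c : List Bool → Γ := fun m => a (cat m zeroSeq) with hc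
  set G : List Bool → Γ := fun m => alphaWord α₀ α₁ m (c m) with hG
  -- f1 : constancy
  have f1 : ∀ (m : List Bool) (z : Cantor), N ≤ m.length → a (cat m z) = c m :=
    fun m z hm => hconst m hm z zeroSeq
  -- f2 : c (m ++ t) = c m for deep m
  have f2 : ∀ (m t : List Bool), N ≤ m.length → c (m ++ t) = c m := by
    intro m t hm
    have : c (m ++ t) = a (cat m (cat t zeroSeq)) := by rw [hc, cat_cat]
    rw [this, f1 m _ hm]
  -- f3 : fixedness of G at deep words
  have f3 : ∀ p : List Bool, N ≤ p.length → α₀ (G p) = G p ∧ α₁ (G p) = G p := by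
    intro p hp
    have e1 : c p = (alphaWord α₀ α₁ (p ++ [true])).symm (alphaWord α₀ α₁ (p ++ [false]) (c p)) := by
      have := hA p zeroSeq
      rw [f1 _ _ (by simp; omega), f1 _ _ (by simp; omega)] at this
      rw [f2 p [true] hp, f2 p [false] hp] at this
      exact this
    have e2 : c p = (alphaWord α₀ α₁ (p ++ [true, false])).symm (alphaWord α₀ α₁ (p ++ [false]) (c p)) := by
      have := hB p zeroSeq
      rw [f1 _ _ (by simp; omega), f1 _ _ (by simp; omega)] at this
      rw [f2 p [true, false] hp, f2 p [false] hp] at this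
      exact this
    rw [eq_comm, MulEquiv.symm_apply_eq] at e1 e2
    -- e1 : alphaWord (p++[false]) (c p) = alphaWord (p++[true]) (c p)
    rw [alphaWord_concat, alphaWord_concat] at e1
    -- e2 : alphaWord (p++[false]) (c p) = alphaWord (p++[true,false]) (c p)
    have htf : ∀ g : Γ, alphaWord α₀ α₁ (p ++ [true, false]) g = α₀ (α₁ (alphaWord α₀ α₁ p g)) := by
      intro g
      have : p ++ [true, false] = (p ++ [true]) ++ [false] := by simp
      rw [this, alphaWord_concat, alphaWord_concat]
      simp
    rw [alphaWord_concat, htf] at e2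
    simp only [if_true, if_false, Bool.false_eq_true, ite_false, ite_true] at e1 e2
    -- e1 : α₀ (αW p c) = α₁ (αW p c); e2 : α₀ (αW p c) = α₀ (α₁ (αW p c))
    have h1 : α₁ (G p) = G p := (α₀.injective e2).symm
    have h0 : α₀ (G p) = G p := e1.trans h1
    exact ⟨h0, h1⟩
  -- f5 : flip invariance of G, no length condition
  have f5 : ∀ (p s : List Bool), G (p ++ false :: s) = G (p ++ true :: s) := by
    intro p s
    have hrw : ∀ b : Bool, p ++ b :: s = (p ++ [b]) ++ s := by simp
    have := hA p (cat s zeroSeq)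
    rw [cat_cat, cat_cat] at this
    -- this : c ((p++[true])++s) = (αW (p++[true])).symm (αW (p++[false]) (c ((p++[false])++s)))
    have hG' : ∀ m : List Bool, G m = alphaWord α₀ α₁ m (a (cat m zeroSeq)) := fun m => rfl
    rw [hrw true, hrw false, hG', hG', this, alphaWord_append α₀ α₁ (p ++ [true]) s,
      MulEquiv.apply_symm_apply, alphaWord_append α₀ α₁ (p ++ [false]) s]
  -- f4' : G (m ++ t) = G m for deep m
  have f4 : ∀ (t m : List Bool), N ≤ m.length → G (m ++ t) = G m := by
    intro t
    induction t with
    | nil => intro m _; simp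
    | cons b t ih =>
      intro m hm
      have h1 : m ++ b :: t = (m ++ [b]) ++ t := by simp
      rw [h1, ih _ (by simp; omega)]
      have h2 : G (m ++ [b]) = (if b then α₁ else α₀) (G m) := by
        rw [hG]
        simp only []
        rw [alphaWord_concat, f2 m [b] hm]
      rw [h2]
      rcases (f3 m hm) with ⟨h0, h1'⟩
      cases b <;> simp [h0, h1']
  -- f6 : equal length words have equal G
  have f6 : ∀ (m m' p : List Bool), m.length = m'.length → G (p ++ m) = G (p ++ m') := by
    intro m
    induction m with
    | nil => intro m' p hlen; rw [List.eq_nil_of_length_eq_zero hlen.symm]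
    | cons b m₁ ih =>
      intro m' p hlen
      cases m' with
      | nil => simp at hlen
      | cons b' m₁' =>
        have h1 : ∀ (d : Bool) (t : List Bool), p ++ d :: t = (p ++ [d]) ++ t := by simp
        have step1 : G (p ++ b :: m₁) = G (p ++ b :: m₁') := by
          rw [h1 b m₁, h1 b m₁']
          exact ih m₁' (p ++ [b]) (by simpa using hlen)
        have step2 : G (p ++ b :: m₁') = G (p ++ b' :: m₁') := by
          cases b <;> cases b'
          · rfl
          · exact f5 p m₁'
          · exact (f5 p m₁').symm
          · rfl
        rw [step1, step2]
  -- conclusion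
  set gstar := G (List.replicate N false) with hgstar
  have hfix : α₀ gstar = gstar ∧ α₁ gstar = gstar := f3 _ (by simp)
  have hGm : ∀ m : List Bool, N ≤ m.length → G m = gstar := by
    intro m hm
    have e1 : G m = G (List.replicate m.length false) := by
      have := f6 m (List.replicate m.length false) [] (by simp)
      simpa using this
    have e2 : List.replicate m.length false =
        List.replicate N false ++ List.replicate (m.length - N) false := by
      rw [← List.replicate_add]
      congr 1
      omega
    rw [e1, e2, f4 _ _ (by simp)]
  refine ⟨gstar, hfix.1, hfix.2, fun x => ?_⟩
  have hx : a x = c (firstWord N x) := by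
    rw [← cat_firstWord N x, f1 _ _ (by simp), hc]
    rw [cat_firstWord]
  have hcm : c (firstWord N x) = gstar := by
    have hGx := hGm (firstWord N x) (by simp)
    rw [hG] at hGx
    simp only [] at hGx
    have hfix2 : alphaWord α₀ α₁ (firstWord N x) gstar = gstar :=
      alphaWord_fix α₀ α₁ hfix.1 hfix.2 _
    exact (alphaWord α₀ α₁ (firstWord N x)).injective (hGx.trans hfix2.symm)
  rw [hx, hcm]

end Key

end CenterAux
namespace CenterAux

/-! ### Word combinatorics for showing `v = 1` -/

lemma getD_append_lt {u : List Bool} (t : List Bool) {i : ℕ} (h : i < u.length) :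
    (u ++ t).getD i false = u.getD i false := List.getD_append _ _ _ _ h

lemma getD_append_len (u : List Bool) (b : Bool) (t : List Bool) :
    (u ++ b :: t).getD u.length false = b := by
  rw [List.getD_append_right _ _ _ _ le_rfl]
  simp

lemma incomp01 (p : List Bool) : Incomp (p ++ [false]) (p ++ [true]) := by
  refine ⟨p.length, by simp, by simp, ?_⟩
  rw [getD_append_len, getD_append_len]
  simp

lemma incomp010 (p : List Bool) : Incomp (p ++ [false]) (p ++ [true, false]) := by
  refine ⟨p.length, by simp, by simp, ?_⟩
  rw [getD_append_len, getD_append_len]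
  simp

lemma sigma_aux {m w : List Bool} (hlen : m.length ≤ w.length)
    (hcomm : ∀ z : Cantor,
      swapFun (m ++ [false]) (m ++ [true]) (cat (w ++ [false]) z) = cat (w ++ [true]) z) :
    m = w := by
  set x : Cantor := cat (w ++ [false]) zeroSeq with hxdef
  have hx := hcomm zeroSeq
  have hxi : ∀ i, i < w.length → x i = w.getD i false := by
    intro i hi
    rw [hxdef, cat_lt _ (by simp; omega), getD_append_lt _ hi]
  have hxw : x w.length = false := by
    rw [hxdef, cat_lt _ (by simp), getD_append_len]
  by_cases hpre : ∀ i, i < m.length → m.getD i false = w.getD i false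
  · -- m is a prefix of w
    rcases eq_or_lt_of_le hlen with heq | hlt
    · exact List.ext_getElem heq (fun i h1 h2 => by
        have := hpre i h1
        rw [List.getD_eq_getElem _ _ h1, List.getD_eq_getElem _ _ h2] at this
        exact this)
    · exfalso
      have hcoord : swapFun (m ++ [false]) (m ++ [true]) x m.length = w.getD m.length false := by
        rw [hx, cat_lt _ (by simp; omega), getD_append_lt _ hlt]
      cases hsb : w.getD m.length false
      · have hxm : x m.length = false := (hxi _ hlt).trans hsb
        have hp : PrefixOf (m ++ [false]) x := by
          intro i hi
          simp only [List.length_append, List.length_cons, List.length_nil] at hi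
          rcases Nat.lt_or_ge i m.length with h'|h'
          · rw [getD_append_lt _ h', hpre i h', ← hxi i (by omega)]
          · have : i = m.length := by omega
            subst this
            rw [getD_append_len, hxm]
        rw [swapFun, if_pos hp, cat_lt _ (by simp), getD_append_len, hsb] at hcoord
        exact Bool.noConfusion hcoord
      · have hxm : x m.length = true := (hxi _ hlt).trans hsb
        have hnp : ¬ PrefixOf (m ++ [false]) x := by
          intro hp
          have := hp m.length (by simp)
          rw [getD_append_len, hxm] at this
          exact Bool.noConfusion this
        have hp : PrefixOf (m ++ [true]) x := by
          intro i hi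
          simp only [List.length_append, List.length_cons, List.length_nil] at hi
          rcases Nat.lt_or_ge i m.length with h'|h'
          · rw [getD_append_lt _ h', hpre i h', ← hxi i (by omega)]
          · have : i = m.length := by omega
            subst this
            rw [getD_append_len, hxm]
        rw [swapFun, if_neg hnp, if_pos hp, cat_lt _ (by simp), getD_append_len, hsb] at hcoord
        exact Bool.noConfusion hcoord
  · -- some coordinate differs : cylinders disjoint, swap fixes x
    push_neg at hpre
    obtain ⟨i, hi, hne⟩ := hpre
    exfalso
    have hnp : ∀ b : Bool, ¬ PrefixOf (m ++ [b]) x := by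
      intro b hp
      have := hp i (by simp; omega)
      rw [getD_append_lt _ hi] at this
      rw [hxi i (by omega)] at this
      exact hne this.symm
    rw [swapFun_of_not (hnp false) (hnp true)] at hx
    have := congrFun hx w.length
    rw [hxw, cat_lt _ (by simp), getD_append_len] at this
    exact Bool.noConfusion this

/-! ### Small glue lemmas -/

lemma isSDP_nil : IsSDP {[]} := by
  intro x
  refine ⟨[], ⟨Finset.mem_singleton_self [], ⟨x, (cat_nil x).symm⟩⟩, ?_⟩
  rintro w ⟨hw, -⟩
  simpa using hw

lemma isLC_const {Γ : Type*} (g : Γ) : IsLC (fun _ : Cantor => g) :=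
  ⟨{[]}, isSDP_nil, fun _ _ _ _ => rfl⟩

lemma memV_refl : memV (Homeomorph.refl Cantor) :=
  fun x => ⟨[], [], x, (cat_nil x).symm, fun _ => rfl⟩

section PermGlue
variable {Γ : Type*} [Group Γ] (α₀ α₁ : Γ ≃* Γ)

lemma permOf_apply (a : Cantor → Γ) (v : Cantor ≃ₜ Cantor) (p : Cantor × Γ) :
    permOf α₀ α₁ a v p = (v p.1, a (v p.1) * tauEquiv α₀ α₁ v p.1 p.2) := rfl

lemma permOf_inv_fst (a : Cantor → Γ) (v : Cantor ≃ₜ Cantor) (p : Cantor × Γ) :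
    ((permOf α₀ α₁ a v)⁻¹ p).1 = v.symm p.1 := rfl

end PermGlue

end CenterAux

open CenterAux

/-- The center of the twisted fraction group `G = LΓ ⋊ V` equals
`D_𝔠(Z(Γ)^α)` : an element `a·v` of `G` is central iff `v = 1` and `a` is the constant map
with value a central element of `Γ` fixed by both `α₀` and `α₁`. -/
theorem center_of_twisted_fraction_group (Γ : Type*) [Group Γ] (α₀ α₁ : Γ ≃* Γ)
    (a : Cantor → Γ) (ha : IsLC a) (v : Cantor ≃ₜ Cantor) (hv : memV v) :
    (∀ (b : Cantor → Γ) (w : Cantor ≃ₜ Cantor), IsLC b → memV w →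
        Commute (permOf α₀ α₁ a v) (permOf α₀ α₁ b w)) ↔
      (v = Homeomorph.refl Cantor ∧
        ∃ g : Γ, g ∈ Subgroup.center Γ ∧ α₀ g = g ∧ α₁ g = g ∧ ∀ x, a x = g) := by
  constructor
  · intro H
    have Hpt : ∀ (b : Cantor → Γ) (w : Cantor ≃ₜ Cantor), IsLC b → memV w →
        ∀ p : Cantor × Γ, permOf α₀ α₁ a v (permOf α₀ α₁ b w p) =
          permOf α₀ α₁ b w (permOf α₀ α₁ a v p) := by
      intro b w hb hw p
      have h := H b w hb hw
      have := Equiv.ext_iff.mp h p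
      rwa [Equiv.Perm.mul_apply, Equiv.Perm.mul_apply] at this
    have hswapc : ∀ (u₁ u₂ : List Bool) (h12 : Incomp u₁ u₂) (t : Cantor),
        v (swapFun u₁ u₂ t) = swapFun u₁ u₂ (v t) := by
      intro u₁ u₂ h12 t
      have h1 := congrArg Prod.fst
        (Hpt (fun _ => 1) (swapH u₁ u₂ h12) (isLC_const 1) (swapH_memV h12) (t, 1))
      simpa [permOf_apply] using h1
    have hswapc' : ∀ (u₁ u₂ : List Bool) (h12 : Incomp u₁ u₂) (t : Cantor),
        v.symm (swapFun u₁ u₂ t) = swapFun u₁ u₂ (v.symm t) := by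
      intro u₁ u₂ h12 t
      have h := (H (fun _ => 1) (swapH u₁ u₂ h12) (isLC_const 1) (swapH_memV h12)).inv_left
      have h2 := Equiv.ext_iff.mp h (t, 1)
      rw [Equiv.Perm.mul_apply, Equiv.Perm.mul_apply] at h2
      have h1 := congrArg Prod.fst h2
      have hs : ∀ q : Cantor × Γ, ((permOf α₀ α₁ a v).symm q).1 = v.symm q.1 := fun q => rfl
      simpa [permOf_apply, permOf_inv_fst, hs] using h1
    have hfix : ∀ x : Cantor, v x = x := by
      intro x
      obtain ⟨m, w, y, hxy, hmv⟩ := hv x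
      have hEq : m = w := by
        rcases le_or_gt m.length w.length with hle | hlt
        · refine sigma_aux hle (fun z => ?_)
          have e1 : v (cat (m ++ [false]) z) = cat (w ++ [false]) z := by
            rw [← cat_cat, hmv, cat_cat]
          have e2 : v (cat (m ++ [true]) z) = cat (w ++ [true]) z := by
            rw [← cat_cat, hmv, cat_cat]
          calc swapFun (m ++ [false]) (m ++ [true]) (cat (w ++ [false]) z)
              = swapFun (m ++ [false]) (m ++ [true]) (v (cat (m ++ [false]) z)) := by
                rw [e1]
            _ = v (swapFun (m ++ [false]) (m ++ [true]) (cat (m ++ [false]) z)) :=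
                (hswapc _ _ (incomp01 m) _).symm
            _ = v (cat (m ++ [true]) z) := by rw [swapFun_cat_left]
            _ = cat (w ++ [true]) z := e2
        · have hsymm : ∀ z : Cantor, v.symm (cat w z) = cat m z := by
            intro z
            rw [← hmv z, Homeomorph.symm_apply_apply]
          have hwm : w = m := by
            refine sigma_aux (le_of_lt hlt) (fun z => ?_)
            have e1 : v.symm (cat (w ++ [false]) z) = cat (m ++ [false]) z := by
              rw [← cat_cat, hsymm, cat_cat]
            have e2 : v.symm (cat (w ++ [true]) z) = cat (m ++ [true]) z := by
              rw [← cat_cat, hsymm, cat_cat]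
            calc swapFun (w ++ [false]) (w ++ [true]) (cat (m ++ [false]) z)
                = swapFun (w ++ [false]) (w ++ [true]) (v.symm (cat (w ++ [false]) z)) := by
                  rw [e1]
              _ = v.symm (swapFun (w ++ [false]) (w ++ [true]) (cat (w ++ [false]) z)) :=
                  (hswapc' _ _ (incomp01 w) _).symm
              _ = v.symm (cat (w ++ [true]) z) := by rw [swapFun_cat_left]
              _ = cat (m ++ [true]) z := e2
          exact hwm.symm
      rw [hxy, hmv, ← hEq]
    have htau : ∀ (x : Cantor) (g : Γ), tauEquiv α₀ α₁ v x g = g := by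
      intro x g
      rw [tauEquiv_eq α₀ α₁ v x (m := []) (w := []) (fun i hi => by simp at hi)
        (fun z => by rw [cat_nil, hfix])]
      rfl
    have hperm : ∀ p : Cantor × Γ, permOf α₀ α₁ a v p = (p.1, a p.1 * p.2) := by
      intro p
      rw [permOf_apply, hfix, htau]
    have hperm1 : ∀ (w : Cantor ≃ₜ Cantor) (p : Cantor × Γ),
        permOf α₀ α₁ (fun _ => (1:Γ)) w p = (w p.1, tauEquiv α₀ α₁ w p.1 p.2) := by
      intro w p
      rw [permOf_apply]
      show (w p.1, 1 * tauEquiv α₀ α₁ w p.1 p.2) = _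
      rw [one_mul]
    have hpermc : ∀ (h : Γ) (p : Cantor × Γ),
        permOf α₀ α₁ (fun _ => h) (Homeomorph.refl Cantor) p = (p.1, h * p.2) := by
      intro h p
      rw [permOf_apply]
      show (p.1, h * tauEquiv α₀ α₁ (Homeomorph.refl Cantor) p.1 p.2) = _
      rw [tauEquiv_refl]
    have hcent : ∀ x : Cantor, a x ∈ Subgroup.center Γ := by
      intro x
      rw [Subgroup.mem_center_iff]
      intro h
      have e := Hpt (fun _ => h) (Homeomorph.refl Cantor) (isLC_const h) memV_refl (x, 1)
      rw [hpermc, hperm, hperm, hpermc] at e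
      have e2 := congrArg Prod.snd e
      simpa [mul_one] using e2.symm
    have hrel : ∀ (w : Cantor ≃ₜ Cantor), memV w → ∀ x : Cantor,
        a (w x) = tauEquiv α₀ α₁ w x (a x) := by
      intro w hw x
      have e := Hpt (fun _ => 1) w (isLC_const 1) hw (x, 1)
      rw [hperm1, hperm, hperm, hperm1] at e
      have e2 := congrArg Prod.snd e
      simpa [map_one, mul_one] using e2
    obtain ⟨N, hN⟩ := isLC_deep ha
    have hA : ∀ (p : List Bool) (z : Cantor),
        a (cat (p ++ [true]) z) = (alphaWord α₀ α₁ (p ++ [true])).symm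
          (alphaWord α₀ α₁ (p ++ [false]) (a (cat (p ++ [false]) z))) := by
      intro p z
      have hI := incomp01 p
      have e := hrel (swapH _ _ hI) (swapH_memV hI) (cat (p ++ [false]) z)
      rw [swapH_apply, swapFun_cat_left] at e
      rw [e, tauEquiv_eq α₀ α₁ (swapH _ _ hI) _ (prefixOf_cat _ z)
        (fun z' => swapFun_cat_left z')]
    have hB : ∀ (p : List Bool) (z : Cantor),
        a (cat (p ++ [true, false]) z) = (alphaWord α₀ α₁ (p ++ [true, false])).symm
          (alphaWord α₀ α₁ (p ++ [false]) (a (cat (p ++ [false]) z))) := by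
      intro p z
      have hI := incomp010 p
      have e := hrel (swapH _ _ hI) (swapH_memV hI) (cat (p ++ [false]) z)
      rw [swapH_apply, swapFun_cat_left] at e
      rw [e, tauEquiv_eq α₀ α₁ (swapH _ _ hI) _ (prefixOf_cat _ z)
        (fun z' => swapFun_cat_left z')]
    obtain ⟨g, h0, h1, hval⟩ := key α₀ α₁ a N hN hA hB
    refine ⟨Homeomorph.ext hfix, g, ?_, h0, h1, hval⟩
    have := hcent zeroSeq
    rwa [hval] at this
  · rintro ⟨hveq, g, hg, h0, h1, hval⟩ b w hb hw
    subst hveq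
    have hperm : ∀ p : Cantor × Γ,
        permOf α₀ α₁ a (Homeomorph.refl Cantor) p = (p.1, g * p.2) := by
      intro p
      rw [permOf_apply]
      show (p.1, a p.1 * tauEquiv α₀ α₁ (Homeomorph.refl Cantor) p.1 p.2) = _
      rw [tauEquiv_refl, hval]
    show permOf α₀ α₁ a (Homeomorph.refl Cantor) * permOf α₀ α₁ b w
        = permOf α₀ α₁ b w * permOf α₀ α₁ a (Homeomorph.refl Cantor)
    refine Equiv.ext fun p => ?_
    rw [Equiv.Perm.mul_apply, Equiv.Perm.mul_apply, hperm, hperm,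
      permOf_apply, permOf_apply, map_mul, tauEquiv_fix α₀ α₁ w p.1 h0 h1]
    have hc : b (w p.1) * g = g * b (w p.1) := Subgroup.mem_center_iff.mp hg (b (w p.1))
    rw [← mul_assoc, ← mul_assoc, hc]
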